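/- Let H be a generalized shearlet dilation group in dimension d, i.e. H = {ε·exp(rY)·(I+X) : ε ∈ {±1}, r ∈ ℝ, X ∈ 𝔰} for a shearing Lie algebra 𝔰 and an admissible diagonal generator Y. Then the dual orbit of the first standard basis vector e₁ satisfies {hᵀe₁ : h ∈ H} = {ξ ∈ ℝ^d : ξ₁ ≠ 0}, this orbit is open, and the dual action of H on it is free: for h ∈ H, hᵀe₁ = e₁ implies h = I. -/

import Mathlib

open MeasureTheory Matrix Metric

noncomputable section

variable {n : Type*} [Fintype n] [DecidableEq n]

/-- The dual action `ξ ↦ hᵀ ξ` of a matrix on Euclidean space. -/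
def dualAct (h : Matrix n n ℝ) (ξ : EuclideanSpace ℝ n) : EuclideanSpace ℝ n :=
  (EuclideanSpace.equiv n ℝ).symm (h.transpose.mulVec (EuclideanSpace.equiv n ℝ ξ))

end

section Aux

lemma stmt13_surj_row (d : ℕ) [NeZero d] (𝔰 : Submodule ℝ (Matrix (Fin d) (Fin d) ℝ))
    (hupper : ∀ X ∈ 𝔰, ∀ i j : Fin d, ¬i < j → X i j = 0)
    (hdim : Module.finrank ℝ ↥𝔰 = d - 1)
    (hinj : ∀ X ∈ 𝔰, ∀ Y ∈ 𝔰, (∀ j, X 0 j = Y 0 j) → X = Y)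
    (v : Fin d → ℝ) (hv : v 0 = 0) : ∃ X ∈ 𝔰, ∀ j, X 0 j = v j := by
  classical
  set π : (Fin d → ℝ) →ₗ[ℝ] ℝ := LinearMap.proj 0 with hπ
  have hπsurj : Function.Surjective π := fun c => ⟨Pi.single 0 c, by simp [hπ]⟩
  have hker : Module.finrank ℝ ↥(LinearMap.ker π) = d - 1 := by
    have h1 := LinearMap.finrank_range_add_finrank_ker π
    rw [LinearMap.range_eq_top.2 hπsurj, finrank_top] at h1
    simp [Module.finrank_self, Module.finrank_pi] at h1
    omega
  let L : ↥𝔰 →ₗ[ℝ] ↥(LinearMap.ker π) :=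
    { toFun := fun X => ⟨(X : Matrix (Fin d) (Fin d) ℝ) 0, by
        simp only [LinearMap.mem_ker, hπ, LinearMap.proj_apply]
        exact hupper X X.2 0 0 (lt_irrefl 0)⟩
      map_add' := fun X Y => by ext j; simp
      map_smul' := fun c X => by ext j; simp }
  have hLinj : Function.Injective L := by
    intro X Y h
    apply Subtype.ext
    exact hinj X X.2 Y Y.2 fun j => congrFun (congrArg Subtype.val h) j
  have hLsurj : Function.Surjective L :=
    (LinearMap.injective_iff_surjective_of_finrank_eq_finrank (by rw [hdim, hker])).1 hLinj
  obtain ⟨X, hX⟩ := hLsurj ⟨v, by simp [hπ, hv]⟩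
  exact ⟨X, X.2, fun j => by
    have := congrFun (congrArg Subtype.val hX) j
    simpa [L] using this⟩

lemma stmt13_row_calc (d : ℕ) [NeZero d] (y : Fin d → ℝ) (hy : y 0 = 1)
    (ε r : ℝ) (X : Matrix (Fin d) (Fin d) ℝ) (j : Fin d) :
    (ε • (NormedSpace.exp (r • Matrix.diagonal y) * (1 + X))) 0 j
      = ε * Real.exp r * ((1 : Matrix (Fin d) (Fin d) ℝ) 0 j + X 0 j) := by
  rw [← diagonal_smul, Matrix.exp_diagonal, Matrix.smul_apply, Matrix.diagonal_mul]
  have h0 : NormedSpace.exp (r • y) 0 = Real.exp r := by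
    rw [Pi.coe_exp]; simp [hy, Real.exp_eq_exp_ℝ]
  rw [h0, smul_eq_mul, Matrix.add_apply]
  ring

lemma stmt13_unit_calc (d : ℕ) [NeZero d] (y : Fin d → ℝ)
    (ε r : ℝ) (hε : ε = 1 ∨ ε = -1) (X : Matrix (Fin d) (Fin d) ℝ)
    (hX : ∀ i j : Fin d, ¬i < j → X i j = 0) :
    IsUnit (ε • (NormedSpace.exp (r • Matrix.diagonal y) * (1 + X))) := by
  have h1 : IsUnit ((1 : Matrix (Fin d) (Fin d) ℝ) + X) := by
    rw [Matrix.isUnit_iff_isUnit_det]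
    have hbt : ((1 : Matrix (Fin d) (Fin d) ℝ) + X).BlockTriangular id := by
      intro i j hij
      simp only [Matrix.add_apply, Matrix.one_apply]
      rw [if_neg (by exact fun h => absurd h (by simpa using hij.ne')),
        hX i j (by simpa using hij.not_gt)]
      simp
    rw [Matrix.det_of_upperTriangular hbt]
    have hd : ∀ i : Fin d, ((1 : Matrix (Fin d) (Fin d) ℝ) + X) i i = 1 := by
      intro i; simp [Matrix.add_apply, hX i i (lt_irrefl i)]
    simp [hd]
  have h2 : IsUnit (NormedSpace.exp (r • Matrix.diagonal y)) := Matrix.isUnit_exp _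
  have h3 : IsUnit (ε • (1 : Matrix (Fin d) (Fin d) ℝ)) := by
    refine ⟨⟨ε • 1, ε • 1, ?_, ?_⟩, rfl⟩ <;>
    · rw [smul_mul_assoc, one_mul, smul_smul]
      show (ε * ε) • (1 : Matrix (Fin d) (Fin d) ℝ) = 1
      rcases hε with h | h <;> simp [h]
  have heq : ε • (NormedSpace.exp (r • Matrix.diagonal y) * (1 + X))
      = (ε • 1) * (NormedSpace.exp (r • Matrix.diagonal y) * (1 + X)) := by
    rw [smul_mul_assoc, one_mul]
  rw [heq]
  exact h3.mul (h2.mul h1)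

lemma stmt13_dualAct_row (d : ℕ) [NeZero d] (M : Matrix (Fin d) (Fin d) ℝ) (j : Fin d) :
    EuclideanSpace.equiv (Fin d) ℝ (dualAct M (EuclideanSpace.single (0 : Fin d) (1 : ℝ))) j
      = M 0 j := by
  simp [dualAct, Matrix.mulVec, dotProduct, EuclideanSpace.single_apply]

end Aux

theorem stmt13 (d : ℕ) [NeZero d]
    (𝔰 : Submodule ℝ (Matrix (Fin d) (Fin d) ℝ))
    (hupper : ∀ X ∈ 𝔰, ∀ i j : Fin d, ¬i < j → X i j = 0)
    (hmul : ∀ X ∈ 𝔰, ∀ Y ∈ 𝔰, X * Y ∈ 𝔰)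
    (hcomm : ∀ X ∈ 𝔰, ∀ Y ∈ 𝔰, X * Y = Y * X)
    (hdim : Module.finrank ℝ ↥𝔰 = d - 1)
    (hinj : ∀ X ∈ 𝔰, ∀ Y ∈ 𝔰, (∀ j, X 0 j = Y 0 j) → X = Y)
    (y : Fin d → ℝ) (hy : y 0 = 1)
    (hYnorm : ∀ X ∈ 𝔰, X * Matrix.diagonal y - Matrix.diagonal y * X ∈ 𝔰)
    (H : Subgroup (GL (Fin d) ℝ))
    (hH : ∀ g : GL (Fin d) ℝ, g ∈ H ↔ ∃ ε r : ℝ, ∃ X ∈ 𝔰, (ε = 1 ∨ ε = -1) ∧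
      (↑g : Matrix (Fin d) (Fin d) ℝ) =
        ε • (NormedSpace.exp (r • Matrix.diagonal y) * (1 + X))) :
    {ξ : EuclideanSpace ℝ (Fin d) | ∃ g : GL (Fin d) ℝ, g ∈ H ∧
        dualAct (↑g) (EuclideanSpace.single (0 : Fin d) (1 : ℝ)) = ξ} =
      {ξ : EuclideanSpace ℝ (Fin d) | EuclideanSpace.equiv (Fin d) ℝ ξ 0 ≠ 0} ∧
    IsOpen {ξ : EuclideanSpace ℝ (Fin d) | EuclideanSpace.equiv (Fin d) ℝ ξ 0 ≠ 0} ∧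
    ∀ g : GL (Fin d) ℝ, g ∈ H →
      dualAct (↑g) (EuclideanSpace.single (0 : Fin d) (1 : ℝ)) =
        EuclideanSpace.single (0 : Fin d) (1 : ℝ) → g = 1 := by
  classical
  refine ⟨?_, ?_, ?_⟩
  · -- orbit equality
    ext ξ
    simp only [Set.mem_setOf_eq]
    constructor
    · rintro ⟨g, hg, rfl⟩
      obtain ⟨ε, r, X, hXs, hε, hmat⟩ := (hH g).1 hg
      rw [stmt13_dualAct_row, hmat, stmt13_row_calc d y hy]
      have hX00 : X 0 0 = 0 := hupper X hXs 0 0 (lt_irrefl 0)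
      rw [hX00, Matrix.one_apply_eq, add_zero, mul_one]
      rcases hε with h | h <;>
        simp [h, Real.exp_ne_zero]
    · intro hξ
      set w : Fin d → ℝ := EuclideanSpace.equiv (Fin d) ℝ ξ with hw
      have hw0 : w 0 ≠ 0 := hξ
      set v : Fin d → ℝ := fun j => if j = 0 then 0 else w j / w 0 with hv
      obtain ⟨X, hXs, hXrow⟩ := stmt13_surj_row d 𝔰 hupper hdim hinj v (by simp [hv])
      set ε : ℝ := if 0 < w 0 then 1 else -1 with hε
      set r : ℝ := Real.log |w 0| with hr
      have hεr : ε * Real.exp r = w 0 := by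
        rw [hr, Real.exp_log (abs_pos.2 hw0)]
        rcases lt_or_gt_of_ne hw0 with h | h
        · rw [hε, if_neg (by linarith), abs_of_neg h]; ring
        · rw [hε, if_pos h, abs_of_pos h]; ring
      have hεpm : ε = 1 ∨ ε = -1 := by
        rw [hε]; split <;> simp
      have hu := stmt13_unit_calc d y ε r hεpm X (hupper X hXs)
      refine ⟨hu.unit, (hH hu.unit).2 ⟨ε, r, X, hXs, hεpm, hu.unit_spec⟩, ?_⟩
      apply (EuclideanSpace.equiv (Fin d) ℝ).injective
      funext j
      rw [stmt13_dualAct_row, hu.unit_spec, stmt13_row_calc d y hy, hεr, hXrow j, ← hw]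
      by_cases hj : j = 0
      · subst hj; simp [hv, Matrix.one_apply_eq]
      · rw [hv]
        simp only [Matrix.one_apply_ne (fun h => hj (Eq.symm h)), if_neg hj, zero_add]
        field_simp
  · have hc : Continuous fun ξ : EuclideanSpace ℝ (Fin d) =>
        EuclideanSpace.equiv (Fin d) ℝ ξ 0 :=
      (continuous_apply (0 : Fin d)).comp (EuclideanSpace.equiv (Fin d) ℝ).continuous
    exact isOpen_ne.preimage hc
  · intro g hg heq
    obtain ⟨ε, r, X, hXs, hε, hmat⟩ := (hH g).1 hg
    have hrow : ∀ j : Fin d, ε * Real.exp r *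
        ((1 : Matrix (Fin d) (Fin d) ℝ) 0 j + X 0 j)
          = (if j = 0 then (1:ℝ) else 0) := by
      intro j
      have h1 := stmt13_dualAct_row d (↑g) j
      rw [heq] at h1
      rw [hmat, stmt13_row_calc d y hy] at h1
      rw [← h1]
      simp [EuclideanSpace.single_apply]
    have h00 := hrow 0
    rw [Matrix.one_apply_eq, hupper X hXs 0 0 (lt_irrefl 0), add_zero, mul_one,
      if_pos rfl] at h00
    have hεone : ε = 1 := by
      rcases hε with h | h
      · exact h
      · exfalso; rw [h] at h00; nlinarith [Real.exp_pos r]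
    have hrone : r = 0 := by
      rw [hεone, one_mul] at h00
      exact (Real.exp_eq_one_iff r).1 h00
    have hX0 : X = 0 := by
      apply hinj X hXs 0 (zero_mem 𝔰)
      intro j
      by_cases hj : j = 0
      · subst hj; rw [hupper X hXs 0 0 (lt_irrefl 0)]; simp
      · have := hrow j
        rw [Matrix.one_apply_ne (fun h => hj (Eq.symm h)), zero_add,
          if_neg hj] at this
        have hne : ε * Real.exp r ≠ 0 := by
          rcases hε with h | h <;> simp [h, Real.exp_ne_zero]
        simpa using (mul_eq_zero.1 this).resolve_left hne
    have : (↑g : Matrix (Fin d) (Fin d) ℝ) = 1 := by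
      rw [hmat, hεone, hrone, hX0, zero_smul, NormedSpace.exp_zero, add_zero, mul_one,
        one_smul]
    exact Units.ext this
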